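/- Along any solution (d(t), φ(t)) of the circumnavigation dynamics ḋ = v·cos φ, φ̇ = v(κ₀(1+γ·cos φ) − sin(φ)/d) with constant v > 0, κ₀ > 0, γ > 0 and d(t) > 0 for all t ≥ 0, the function t ↦ V(d(t), φ(t)) is nonincreasing, where V(d, φ) = ½(d − κ₀⁻¹)² + κ₀⁻¹·d·(1 − sin φ). -/

import Mathlib

theorem lyapunov_nonincreasing (v κ₀ γ : ℝ) (hv : 0 < v) (hκ : 0 < κ₀) (hγ : 0 < γ)
    (d φ : ℝ → ℝ)
    (hdpos : ∀ t : ℝ, 0 ≤ t → 0 < d t)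
    (hd : ∀ t : ℝ, 0 ≤ t → HasDerivAt d (v * Real.cos (φ t)) t)
    (hφ : ∀ t : ℝ, 0 ≤ t →
      HasDerivAt φ (v * (κ₀ * (1 + γ * Real.cos (φ t)) - Real.sin (φ t) / d t)) t) :
    AntitoneOn (fun t => (1/2) * (d t - κ₀⁻¹)^2 + κ₀⁻¹ * d t * (1 - Real.sin (φ t)))
      (Set.Ici (0:ℝ)) := by
  set f : ℝ → ℝ := fun t => (1/2) * (d t - κ₀⁻¹)^2 + κ₀⁻¹ * d t * (1 - Real.sin (φ t))
  have key : ∀ t : ℝ, 0 ≤ t →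
      HasDerivAt f (-(v * γ * d t * (Real.cos (φ t))^2)) t := by
    intro t ht
    have h1 := hd t ht
    have h2 := hφ t ht
    have hdt := (hdpos t ht).ne'
    have h3 : HasDerivAt (fun t => Real.sin (φ t))
        (Real.cos (φ t) * (v * (κ₀ * (1 + γ * Real.cos (φ t)) - Real.sin (φ t) / d t))) t :=
      (Real.hasDerivAt_sin (φ t)).comp t h2
    have h := (((h1.sub_const κ₀⁻¹).pow 2).const_mul (1/2 : ℝ)).add
      (((h1.const_mul κ₀⁻¹).mul ((h3.const_sub 1))))
    refine h.congr_deriv ?_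
    have hκ0 := hκ.ne'
    field_simp
    linear_combination (2 * Real.cos (φ t) * (κ₀ * d t - 1)) * mul_inv_cancel₀ hκ0
  have hcont : ContinuousOn f (Set.Ici 0) := fun t ht =>
    ((key t ht).continuousAt).continuousWithinAt
  apply antitoneOn_of_deriv_nonpos (convex_Ici 0) hcont
  · intro t ht
    rw [interior_Ici] at ht
    exact ((key t (le_of_lt ht)).differentiableAt).differentiableWithinAt
  · intro t ht
    rw [interior_Ici] at ht
    rw [(key t ht.le).deriv]
    have hd0 := hdpos t ht.le
    have : 0 ≤ v * γ * d t * Real.cos (φ t) ^ 2 := by positivity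
    linarith
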